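/- Let A be a real symmetric n×n matrix (n ≥ 1) with eigenvalues λ₁, …, λₙ listed with multiplicity (i.e. the characteristic polynomial of A equals ∏ᵢ (X − λᵢ)), and let m = (λ₁ + ⋯ + λₙ)/n. Then the diameter dm of the orbit Orbit(A) = {g * A * gᵀ : g ∈ SO(n)}, measured in the Frobenius metric, satisfies maxᵢⱼ |λᵢ − λⱼ| ≤ dm ≤ 2·‖A − m•1‖, where ‖A − m•1‖ is the Frobenius distance from A to the line of scalar matrices. -/

import Mathlib

open Matrix

attribute [local instance] Matrix.frobeniusNormedAddCommGroup

namespace OrbitAux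

variable {n : ℕ}

lemma frob_sq (M : Matrix (Fin n) (Fin n) ℝ) :
    ‖M‖ = Real.sqrt ((M * Mᵀ).trace) := by
  rw [Matrix.frobenius_norm_def, Real.sqrt_eq_rpow]
  congr 1
  have h : ∀ x : ℝ, ‖x‖ ^ (2 : ℝ) = x * x := fun x => by
    rw [Real.rpow_two, Real.norm_eq_abs, sq_abs, sq]
  simp_rw [h, Matrix.trace, Matrix.diag, Matrix.mul_apply, Matrix.transpose_apply]

lemma norm_conj {g : Matrix (Fin n) (Fin n) ℝ} (hg : g * gᵀ = 1)
    (M : Matrix (Fin n) (Fin n) ℝ) : ‖g * M * gᵀ‖ = ‖M‖ := by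
  have hg' : gᵀ * g = 1 := mul_eq_one_comm.mp hg
  rw [frob_sq, frob_sq]
  have key : (g * M * gᵀ) * (g * M * gᵀ)ᵀ = g * (M * Mᵀ) * gᵀ := by
    simp only [Matrix.transpose_mul, Matrix.transpose_transpose, ← Matrix.mul_assoc]
    rw [Matrix.mul_assoc (g * M) gᵀ g, hg', Matrix.mul_one]
  rw [key, Matrix.trace_mul_cycle, hg', Matrix.one_mul]

lemma charpoly_conj {g : Matrix (Fin n) (Fin n) ℝ} (hg : g * gᵀ = 1)
    (A : Matrix (Fin n) (Fin n) ℝ) : (g * A * gᵀ).charpoly = A.charpoly := by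
  have hg' : gᵀ * g = 1 := mul_eq_one_comm.mp hg
  set f : Matrix (Fin n) (Fin n) ℝ →+* Matrix (Fin n) (Fin n) (Polynomial ℝ) :=
    (Polynomial.C : ℝ →+* Polynomial ℝ).mapMatrix with hf
  have key : charmatrix (g * A * gᵀ) = f g * charmatrix A * f gᵀ := by
    unfold charmatrix
    rw [Matrix.mul_sub, Matrix.sub_mul]
    congr 1
    · have hs : (Matrix.scalar (Fin n) (Polynomial.X : Polynomial ℝ)) =
          (Polynomial.X : Polynomial ℝ) • (1 : Matrix (Fin n) (Fin n) (Polynomial ℝ)) := by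
        rw [Matrix.scalar_apply, Matrix.smul_one_eq_diagonal]
      rw [hs, Matrix.mul_smul, Matrix.smul_mul, Matrix.mul_one, ← _root_.map_mul, hg, _root_.map_one]
    · rw [← _root_.map_mul, ← _root_.map_mul]
  unfold Matrix.charpoly
  rw [key, Matrix.det_mul, Matrix.det_mul]
  have h1 : (f g).det * (charmatrix A).det * (f gᵀ).det
      = (charmatrix A).det * ((f gᵀ).det * (f g).det) := by ring
  have h2 : (f gᵀ).det * (f g).det = 1 := by
    rw [← Matrix.det_mul, ← _root_.map_mul, hg', _root_.map_one, Matrix.det_one]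
  rw [h1, h2, mul_one]

lemma charpoly_diag (d : Fin n → ℝ) :
    (Matrix.diagonal d).charpoly = ∏ i, (Polynomial.X - Polynomial.C (d i)) := by
  have key : charmatrix (Matrix.diagonal d)
      = Matrix.diagonal (fun i => Polynomial.X - Polynomial.C (d i)) := by
    ext i j
    by_cases h : i = j
    · subst h; simp
    · simp [h, Matrix.diagonal_apply_ne _ h]
  rw [Matrix.charpoly, key, Matrix.det_diagonal]

/-- membership in the SO(n) orbit after fixing the sign of the determinant. -/
lemma diag_mem (hn : 1 ≤ n) (A : Matrix (Fin n) (Fin n) ℝ)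
    {g : Matrix (Fin n) (Fin n) ℝ} {d : Fin n → ℝ}
    (hg : g * gᵀ = 1) (hgA : g * A * gᵀ = Matrix.diagonal d) :
    Matrix.diagonal d ∈ {B : Matrix (Fin n) (Fin n) ℝ |
      ∃ g : Matrix (Fin n) (Fin n) ℝ, g * gᵀ = 1 ∧ g.det = 1 ∧ B = g * A * gᵀ} := by
  have hdet : g.det * g.det = 1 := by
    have := congrArg Matrix.det hg
    rwa [Matrix.det_mul, Matrix.det_transpose, Matrix.det_one] at this
  rcases mul_self_eq_one_iff.mp hdet with h1 | h1
  · exact ⟨g, hg, h1, hgA.symm⟩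
  · haveI : NeZero n := ⟨by omega⟩
    set ε : Fin n → ℝ := fun k => if k = 0 then (-1 : ℝ) else 1 with hε
    set E : Matrix (Fin n) (Fin n) ℝ := Matrix.diagonal ε with hE
    have hfun : (fun k => ε k * ε k) = fun _ => (1 : ℝ) := by
      funext k
      simp only [hε]
      split_ifs <;> norm_num
    have hE2 : E * E = 1 := by
      rw [hE, Matrix.diagonal_mul_diagonal, hfun, Matrix.diagonal_one]
    have hEt : Eᵀ = E := Matrix.diagonal_transpose ε
    have hdE : E.det = -1 := by
      rw [hE, Matrix.det_diagonal, hε]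
      rw [Finset.prod_ite_eq' Finset.univ (0 : Fin n) (fun _ => (-1 : ℝ))]
      simp
    refine ⟨E * g, ?_, ?_, ?_⟩
    · rw [Matrix.transpose_mul, hEt, ← Matrix.mul_assoc, Matrix.mul_assoc E g gᵀ, hg,
        Matrix.mul_one, hE2]
    · rw [Matrix.det_mul, hdE, h1]; norm_num
    · have hassoc : E * g * A * (gᵀ * E) = E * (g * A * gᵀ) * E := by
        simp only [Matrix.mul_assoc]
      have hfun2 : (fun k => ε k * d k * ε k) = d := by
        funext k
        simp only [hε]
        split_ifs <;> ring
      rw [Matrix.transpose_mul, hEt, hassoc, hgA, hE, Matrix.diagonal_mul_diagonal,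
        Matrix.diagonal_mul_diagonal, hfun2]

/-- permutation conjugation of a diagonal matrix. -/
lemma perm_conj (τ : Equiv.Perm (Fin n)) (d : Fin n → ℝ) :
    ∃ P : Matrix (Fin n) (Fin n) ℝ, P * Pᵀ = 1 ∧
      P * Matrix.diagonal d * Pᵀ = Matrix.diagonal (d ∘ τ) := by
  refine ⟨τ.toPEquiv.toMatrix, ?_, ?_⟩
  · rw [← PEquiv.toMatrix_symm, ← Equiv.toPEquiv_symm, ← PEquiv.toMatrix_trans,
      ← Equiv.toPEquiv_trans, Equiv.self_trans_symm, Equiv.toPEquiv_refl, PEquiv.toMatrix_refl]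
  · rw [← PEquiv.toMatrix_symm, ← Equiv.toPEquiv_symm, PEquiv.toMatrix_toPEquiv_mul,
      PEquiv.mul_toMatrix_toPEquiv, Equiv.symm_symm, Matrix.submatrix_submatrix,
      Function.comp_id, Function.id_comp, Matrix.submatrix_diagonal d τ τ.injective]

end OrbitAux

open OrbitAux in
/-- Bounds on the diameter (in the Frobenius metric) of the SO(n)-orbit of a
symmetric matrix with eigenvalues λ₁,…,λₙ:
max |λᵢ − λⱼ| ≤ diam ≤ 2·dist(A, line of scalar matrices). -/
theorem orbit_diameter_bounds
    (n : ℕ) (hn : 1 ≤ n) (A : Matrix (Fin n) (Fin n) ℝ) (hA : A.IsSymm)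
    (l : Fin n → ℝ)
    (hl : A.charpoly = ∏ i, (Polynomial.X - Polynomial.C (l i)))
    (m : ℝ) (hm : m = (∑ i, l i) / n) :
    (∀ i j : Fin n, |l i - l j| ≤
        Metric.diam {B : Matrix (Fin n) (Fin n) ℝ |
          ∃ g : Matrix (Fin n) (Fin n) ℝ,
            g * gᵀ = 1 ∧ g.det = 1 ∧ B = g * A * gᵀ}) ∧
    Metric.diam {B : Matrix (Fin n) (Fin n) ℝ |
        ∃ g : Matrix (Fin n) (Fin n) ℝ,
          g * gᵀ = 1 ∧ g.det = 1 ∧ B = g * A * gᵀ} ≤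
      2 * ‖A - m • (1 : Matrix (Fin n) (Fin n) ℝ)‖ := by
  set S : Set (Matrix (Fin n) (Fin n) ℝ) := {B : Matrix (Fin n) (Fin n) ℝ |
    ∃ g : Matrix (Fin n) (Fin n) ℝ, g * gᵀ = 1 ∧ g.det = 1 ∧ B = g * A * gᵀ} with hS
  -- eigen-decomposition
  have hA' : A.IsHermitian := by
    rw [Matrix.IsHermitian, Matrix.conjTranspose]
    exact (Matrix.conjTranspose_eq_transpose_of_trivial A).trans hA
  set e : Fin n → ℝ := hA'.eigenvalues with he
  set U : Matrix (Fin n) (Fin n) ℝ := (hA'.eigenvectorUnitary : Matrix (Fin n) (Fin n) ℝ)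
    with hU
  have hUmem := hA'.eigenvectorUnitary.2
  rw [Unitary.mem_iff] at hUmem
  have hUs : star U = Uᵀ := by
    ext i j
    simp [Matrix.star_apply]
  have hspec : A = U * Matrix.diagonal e * Uᵀ := by
    have := hA'.spectral_theorem
    rw [Unitary.conjStarAlgAut_apply, hUs] at this
    rw [RCLike.ofReal_real_eq_id, Function.id_comp] at this
    exact this
  -- the diagonal matrix of eigenvalues, permuted arbitrarily, lies in the orbit
  have key : ∀ τ : Equiv.Perm (Fin n), Matrix.diagonal (e ∘ τ) ∈ S := by
    intro τ
    obtain ⟨P, hPP, hPD⟩ := perm_conj τ e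
    have hg : (P * Uᵀ) * (P * Uᵀ)ᵀ = 1 := by
      rw [Matrix.transpose_mul, Matrix.transpose_transpose, ← Matrix.mul_assoc,
        Matrix.mul_assoc P Uᵀ U]
      rw [← hUs, hUmem.1, Matrix.mul_one, hPP]
    have hgA : (P * Uᵀ) * A * (P * Uᵀ)ᵀ = Matrix.diagonal (e ∘ τ) := by
      rw [Matrix.transpose_mul, Matrix.transpose_transpose, hspec]
      have : P * Uᵀ * (U * Matrix.diagonal e * Uᵀ) * (U * Pᵀ)
          = P * (Uᵀ * U) * Matrix.diagonal e * (Uᵀ * U) * Pᵀ := by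
        simp only [Matrix.mul_assoc]
      rw [this, ← hUs, hUmem.1, Matrix.mul_one, Matrix.mul_one]
      rw [← hPD]
    exact diag_mem hn A hg hgA
  -- multiset of l equals multiset of e, giving a permutation
  have hchar : (Matrix.diagonal e).charpoly = A.charpoly := by
    have h0 : Uᵀ * A * (Uᵀ)ᵀ = Matrix.diagonal e := by
      rw [Matrix.transpose_transpose, hspec]
      have : Uᵀ * (U * Matrix.diagonal e * Uᵀ) * U
          = (Uᵀ * U) * Matrix.diagonal e * (Uᵀ * U) := by
        simp only [Matrix.mul_assoc]
      rw [this, ← hUs, hUmem.1, Matrix.one_mul, Matrix.mul_one]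
    have hg : Uᵀ * (Uᵀ)ᵀ = 1 := by
      rw [Matrix.transpose_transpose, ← hUs, hUmem.1]
    rw [← h0]
    exact charpoly_conj hg A
  have hprod : ∏ i, (Polynomial.X - Polynomial.C (e i))
      = ∏ i, (Polynomial.X - Polynomial.C (l i)) := by
    rw [← charpoly_diag e, hchar, hl]
  have hmult : (Finset.univ.val.map e) = (Finset.univ.val.map l) := by
    have h1 := congrArg Polynomial.roots hprod
    have key2 : ∀ f : Fin n → ℝ,
        (∏ i, (Polynomial.X - Polynomial.C (f i))).roots = Finset.univ.val.map f := by
      intro f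
      have : ∏ i, (Polynomial.X - Polynomial.C (f i))
          = ((Finset.univ.val.map f).map fun a => Polynomial.X - Polynomial.C a).prod := by
        rw [Multiset.map_map]
        rfl
      rw [this, Polynomial.roots_multiset_prod_X_sub_C]
    rwa [key2, key2] at h1
  have hperm : ∃ σ : Equiv.Perm (Fin n), l = e ∘ σ := by
    have hLp : (List.ofFn (l ∘ Tuple.sort l)) = (List.ofFn (e ∘ Tuple.sort e)) := by
      have hp : (List.ofFn (l ∘ Tuple.sort l)).Perm (List.ofFn (e ∘ Tuple.sort e)) := by
        refine ((Tuple.sort l).ofFn_comp_perm l).trans ?_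
        refine List.Perm.trans ?_ ((Tuple.sort e).ofFn_comp_perm e).symm
        rw [← Multiset.coe_eq_coe, ← Fin.univ_val_map, ← Fin.univ_val_map]
        exact hmult.symm
      exact hp.eq_of_sortedLE ((Tuple.monotone_sort l).sortedLE_ofFn)
        ((Tuple.monotone_sort e).sortedLE_ofFn)
    have hfn : l ∘ Tuple.sort l = e ∘ Tuple.sort e := List.ofFn_injective hLp
    refine ⟨(Tuple.sort l).symm.trans (Tuple.sort e), ?_⟩
    funext x
    have := congrFun hfn ((Tuple.sort l).symm x)
    simpa using this
  obtain ⟨σ, hσ⟩ := hperm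
  -- boundedness of the orbit
  have hBdd : Bornology.IsBounded S := by
    apply (Metric.isBounded_iff_subset_closedBall 0).mpr
    refine ⟨‖A‖, fun B hB => ?_⟩
    obtain ⟨g, hg, _, rfl⟩ := hB
    simp only [Metric.mem_closedBall, dist_zero_right]
    rw [norm_conj hg A]
  constructor
  · -- lower bound
    intro i j
    rcases eq_or_ne i j with h | h
    · simp [h, Metric.diam_nonneg]
    · -- the two diagonal matrices
      have h1 : Matrix.diagonal (e ∘ σ) ∈ S := key σ
      have h2 : Matrix.diagonal (e ∘ ((Equiv.swap i j).trans σ)) ∈ S := key _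
      have hl1 : (e ∘ σ) = l := hσ.symm
      have hl2 : e ∘ ((Equiv.swap i j).trans σ) = l ∘ Equiv.swap i j := by
        funext x
        simp [hσ, Equiv.trans_apply]
      rw [hl1] at h1
      rw [hl2] at h2
      have hd := Metric.dist_le_diam_of_mem hBdd h1 h2
      refine le_trans ?_ hd
      rw [dist_eq_norm, Matrix.diagonal_sub]
      rw [frob_sq, Matrix.diagonal_transpose, Matrix.diagonal_mul_diagonal,
        Matrix.trace_diagonal]
      have hterm : (l i - l j) ^ 2 ≤
          ∑ k, (l k - (l ∘ Equiv.swap i j) k) * (l k - (l ∘ Equiv.swap i j) k) := by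
        refine le_trans ?_ (Finset.single_le_sum (f := fun k =>
          (l k - (l ∘ Equiv.swap i j) k) * (l k - (l ∘ Equiv.swap i j) k))
          (fun k _ => mul_self_nonneg _) (Finset.mem_univ i))
        simp only [Function.comp_apply, Equiv.swap_apply_left]
        rw [sq]
      calc |l i - l j| = Real.sqrt ((l i - l j) ^ 2) := (Real.sqrt_sq_eq_abs _).symm
        _ ≤ _ := Real.sqrt_le_sqrt hterm
  · -- upper bound
    have hdist : ∀ B ∈ S, dist B (m • (1 : Matrix (Fin n) (Fin n) ℝ))
        = ‖A - m • (1 : Matrix (Fin n) (Fin n) ℝ)‖ := by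
      intro B hB
      obtain ⟨g, hg, _, rfl⟩ := hB
      rw [dist_eq_norm]
      have : g * A * gᵀ - m • (1 : Matrix (Fin n) (Fin n) ℝ)
          = g * (A - m • (1 : Matrix (Fin n) (Fin n) ℝ)) * gᵀ := by
        rw [Matrix.mul_sub, Matrix.sub_mul]
        congr 1
        rw [Matrix.mul_smul, Matrix.smul_mul, Matrix.mul_one, hg]
      rw [this, norm_conj hg]
    apply Metric.diam_le_of_forall_dist_le
    · positivity
    · intro x hx y hy
      calc dist x y ≤ dist x (m • (1 : Matrix (Fin n) (Fin n) ℝ))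
            + dist (m • (1 : Matrix (Fin n) (Fin n) ℝ)) y := dist_triangle _ _ _
        _ = 2 * ‖A - m • (1 : Matrix (Fin n) (Fin n) ℝ)‖ := by
            rw [hdist x hx, dist_comm, hdist y hy]; ring
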